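/- Let Γ be the tile graph of a sequence of covers {Xⁿ} of a set S, with Gromov product (X·Y) := ½(|X| + |Y| − |X−Y|) with respect to the base tile S. Suppose there are constants C₁ ≥ 0 and C_cv ≥ 0 such that |m(X,Y) − (X·Y)| ≤ C₁ for all tiles X,Y (where m is the tile-extended proximity function) and m(X,Y) ≥ min{m(X,Z), m(Z,Y)} − C_cv for all tiles X,Y,Z. Then Γ is Gromov hyperbolic: (X·Y) ≥ min{(X·Z), (Z·Y)} − (2C₁ + C_cv) for all tiles X,Y,Z. -/

import Mathlib

open Set

variable {S : Type*}

/-- A chain of tiles in a cover `T`: consecutive tiles intersect. -/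
def TileChain (T : Set (Set S)) (A B : Set S) (k : ℕ) : Prop :=
  ∃ c : ℕ → Set S, c 0 = A ∧ c k = B ∧ (∀ i, i ≤ k → c i ∈ T) ∧
    ∀ i, i < k → (c i ∩ c (i + 1)).Nonempty

/-- The width-`w` neighborhood `U_w(A)` of a tile `A` in a cover `T`. -/
def Uw (T : Set (Set S)) (w : ℕ) (A : Set S) : Set S :=
  ⋃₀ {B | B ∈ T ∧ ∃ k, k ≤ w ∧ TileChain T A B k}

/-- The `U_w`-proximity function associated with a sequence of covers. -/
noncomputable def prox (X : ℕ → Set (Set S)) (w : ℕ) (x y : S) : ℕ∞ :=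
  ⨆ n ∈ {n : ℕ | ∃ A ∈ X n, ∃ B ∈ X n, x ∈ A ∧ y ∈ B ∧
    (Uw (X n) w A ∩ Uw (X n) w B).Nonempty}, (n : ℕ∞)

/-- The proximity function extended to tiles: `m(X,Y) = min{m(x,y) : x ∈ X, y ∈ Y}`. -/
noncomputable def proxSet (X : ℕ → Set (Set S)) (w : ℕ) (A B : Set S) : ℕ∞ :=
  ⨅ x ∈ A, ⨅ y ∈ B, prox X w x y

/-- The vertex set of the tile graph: tiles with their levels. -/
abbrev Tile (X : ℕ → Set (Set S)) : Type _ := {p : ℕ × Set S // p.2 ∈ X p.1}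

/-- The tile graph of a sequence of covers: two distinct tiles are adjacent iff they
intersect and their levels differ by at most `1`. -/
def tileGraph (X : ℕ → Set (Set S)) : SimpleGraph (Tile X) where
  Adj p q := p ≠ q ∧ (p.1.2 ∩ q.1.2).Nonempty ∧ p.1.1 ≤ q.1.1 + 1 ∧ q.1.1 ≤ p.1.1 + 1
  symm := by
    constructor
    rintro p q ⟨h1, h2, h3, h4⟩
    refine ⟨h1.symm, ?_, h4, h3⟩
    rwa [Set.inter_comm]
  loopless := by
    constructor
    rintro p ⟨h1, -⟩
    exact h1 rfl

/-- The Gromov product `(X·Y) = ½(|X| + |Y| − |X−Y|)` on the tile graph, with respect to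
the base point of level `0`. -/
noncomputable def gromovProd (X : ℕ → Set (Set S)) (p q : Tile X) : ℝ :=
  ((p.1.1 : ℝ) + (q.1.1 : ℝ) - ((tileGraph X).dist p q : ℝ)) / 2

/-- If the tile-extended proximity function `m` agrees, up to a bounded error `C₁`, with
the Gromov product on the tile graph, and satisfies the hyperbolicity inequality with
constant `C_cv`, then the tile graph is Gromov hyperbolic:
`(X·Y) ≥ min{(X·Z), (Z·Y)} − (2C₁ + C_cv)`. -/
theorem stmt14 (S : Type*) (X : ℕ → Set (Set S)) (w : ℕ)
    (C₁ : ℝ) (hC₁ : 0 ≤ C₁) (Ccv : ℕ)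
    (hcomp : ∀ p q : Tile X, proxSet X w p.1.2 q.1.2 ≠ ⊤ ∧
      |((proxSet X w p.1.2 q.1.2).toNat : ℝ) - gromovProd X p q| ≤ C₁)
    (hhyp : ∀ p q r : Tile X,
      min (proxSet X w p.1.2 r.1.2) (proxSet X w r.1.2 q.1.2) ≤
        proxSet X w p.1.2 q.1.2 + (Ccv : ℕ∞)) :
    ∀ p q r : Tile X,
      min (gromovProd X p r) (gromovProd X r q) - (2 * C₁ + (Ccv : ℝ)) ≤
        gromovProd X p q := by
  intro p q r
  obtain ⟨hpq, hpq'⟩ := hcomp p q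
  obtain ⟨hpr, hpr'⟩ := hcomp p r
  obtain ⟨hrq, hrq'⟩ := hcomp r q
  have h := hhyp p q r
  set apq := (proxSet X w p.1.2 q.1.2).toNat with hapq
  set apr := (proxSet X w p.1.2 r.1.2).toNat with hapr
  set arq := (proxSet X w r.1.2 q.1.2).toNat with harq
  have hnat : min apr arq ≤ apq + Ccv := by
    have e1 : proxSet X w p.1.2 r.1.2 = (apr : ℕ∞) := (ENat.coe_toNat hpr).symm
    have e2 : proxSet X w r.1.2 q.1.2 = (arq : ℕ∞) := (ENat.coe_toNat hrq).symm
    have e3 : proxSet X w p.1.2 q.1.2 = (apq : ℕ∞) := (ENat.coe_toNat hpq).symm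
    rw [e1, e2, e3] at h
    rcases le_total apr arq with hle | hle
    · rw [min_eq_left (by exact_mod_cast hle : (apr : ℕ∞) ≤ arq)] at h
      rw [min_eq_left hle]
      exact_mod_cast h
    · rw [min_eq_right (by exact_mod_cast hle : (arq : ℕ∞) ≤ apr)] at h
      rw [min_eq_right hle]
      exact_mod_cast h
  have hminr : ((min apr arq : ℕ) : ℝ) ≤ (apq : ℝ) + (Ccv : ℝ) := by
    exact_mod_cast hnat
  have h1 := abs_le.mp hpr'
  have h2 := abs_le.mp hrq'
  have h3 := abs_le.mp hpq'
  rcases le_total apr arq with hle | hle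
  · rw [min_eq_left hle] at hminr
    have : min (gromovProd X p r) (gromovProd X r q) ≤ gromovProd X p r :=
      min_le_left _ _
    linarith
  · rw [min_eq_right hle] at hminr
    have : min (gromovProd X p r) (gromovProd X r q) ≤ gromovProd X r q :=
      min_le_right _ _
    linarith
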